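/- Let S be a symmetric d×d real matrix, c ≥ 1, and m ≥ 4 a positive integer. Then the minimum of ∑_{i=1}^m wᵢ δᵢᵀ S δᵢ over w ∈ ℝᵐ with ∑wᵢ = 1, ∑|wᵢ| ≤ c, and δᵢ ∈ ℝᵈ with ∑wᵢδᵢ = 0 and ‖δᵢ‖ ≤ 1 equals ((c+1)/2)·min(λ_min(S), 0) − ((c−1)/2)·max(λ_max(S), 0), independently of m. -/

import Mathlib

open Matrix BigOperators

lemma symm_isHermitian {d : ℕ} {S : Matrix (Fin d) (Fin d) ℝ} (hS : S.IsSymm) :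
    S.IsHermitian := by
  rw [Matrix.IsHermitian, Matrix.conjTranspose]
  ext i j; simpa using congrFun (congrFun hS i) j

lemma quad_lower {d : ℕ} {S : Matrix (Fin d) (Fin d) ℝ} (hH : S.IsHermitian) {l : ℝ}
    (hl : ∀ μ : ℝ, (∃ v : Fin d → ℝ, v ≠ 0 ∧ S.mulVec v = μ • v) → l ≤ μ)
    (x : Fin d → ℝ) : l * (x ⬝ᵥ x) ≤ x ⬝ᵥ S.mulVec x := by
  have hA : (S - l • 1).IsHermitian := hH.sub (by
    show (l • (1 : Matrix (Fin d) (Fin d) ℝ))ᴴ = _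
    rw [Matrix.conjTranspose_smul]
    simp)
  have hps : (S - l • 1).PosSemidef := by
    apply (Matrix.IsHermitian.posSemidef_iff_eigenvalues_nonneg hA).mpr
    intro i
    have hv := hA.mulVec_eigenvectorBasis i
    set v : Fin d → ℝ := ⇑(hA.eigenvectorBasis i) with hvdef
    have hvne : v ≠ 0 := by
      intro h
      exact hA.eigenvectorBasis.orthonormal.ne_zero i (by ext k; exact congrFun h k)
    have hSv : S.mulVec v = (hA.eigenvalues i + l) • v := by
      rw [Matrix.sub_mulVec, Matrix.smul_mulVec, Matrix.one_mulVec] at hv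
      have := sub_eq_iff_eq_add.mp hv
      rw [this]
      ext k
      simp only [Pi.add_apply, Pi.smul_apply, smul_eq_mul, add_smul]
      ring
    have := hl _ ⟨v, hvne, hSv⟩
    linarith [show (0 : Fin d → ℝ) i = 0 from rfl]
  have h0 := hps.dotProduct_mulVec_nonneg x
  have hstar : star x = x := by simp
  rw [hstar, Matrix.sub_mulVec, Matrix.smul_mulVec, Matrix.one_mulVec,
    dotProduct_sub, dotProduct_smul] at h0
  simp only [smul_eq_mul] at h0
  linarith

lemma quad_upper {d : ℕ} {S : Matrix (Fin d) (Fin d) ℝ} (hH : S.IsHermitian) {l : ℝ}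
    (hl : ∀ μ : ℝ, (∃ v : Fin d → ℝ, v ≠ 0 ∧ S.mulVec v = μ • v) → μ ≤ l)
    (x : Fin d → ℝ) : x ⬝ᵥ S.mulVec x ≤ l * (x ⬝ᵥ x) := by
  have h := quad_lower (S := -S) hH.neg (l := -l) ?_ x
  · rw [Matrix.neg_mulVec, dotProduct_neg] at h
    linarith
  · rintro μ ⟨v, hv, hSv⟩
    rw [Matrix.neg_mulVec, neg_eq_iff_eq_neg, ← neg_smul] at hSv
    have := hl _ ⟨v, hv, hSv⟩
    linarith

lemma sum_four {M : Type*} [AddCommMonoid M] {m : ℕ} (hm : 4 ≤ m) (f : Fin m → M)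
    (hf : ∀ i : Fin m, 4 ≤ i.val → f i = 0) :
    ∑ i, f i = f ⟨0, by omega⟩ + f ⟨1, by omega⟩ + f ⟨2, by omega⟩ + f ⟨3, by omega⟩ := by
  classical
  have h0 : (4:ℕ) ≤ m := hm
  rw [← Finset.sum_subset (Finset.subset_univ
      ({⟨0, by omega⟩, ⟨1, by omega⟩, ⟨2, by omega⟩, ⟨3, by omega⟩} : Finset (Fin m)))]
  · rw [Finset.sum_insert, Finset.sum_insert, Finset.sum_insert, Finset.sum_singleton,
      ← add_assoc, ← add_assoc]
    all_goals simp [Finset.mem_insert, Finset.mem_singleton, Fin.ext_iff]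
  · intro x _ hx
    apply hf
    simp only [Finset.mem_insert, Finset.mem_singleton, Fin.ext_iff] at hx
    omega

theorem stmt_8 (d m : ℕ) (hm : 4 ≤ m) (c : ℝ) (hc : 1 ≤ c)
    (S : Matrix (Fin d) (Fin d) ℝ) (hS : S.IsSymm) (lmin lmax : ℝ)
    (hmin : IsLeast {μ : ℝ | ∃ v : Fin d → ℝ, v ≠ 0 ∧ S.mulVec v = μ • v} lmin)
    (hmax : IsGreatest {μ : ℝ | ∃ v : Fin d → ℝ, v ≠ 0 ∧ S.mulVec v = μ • v} lmax) :
    IsLeast {t : ℝ | ∃ (w : Fin m → ℝ) (δ : Fin m → Fin d → ℝ),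
      ∑ i, w i = 1 ∧ ∑ i, |w i| ≤ c ∧ ∑ i, w i • δ i = 0 ∧
      (∀ i, δ i ⬝ᵥ δ i ≤ 1) ∧
      t = ∑ i, w i * (δ i ⬝ᵥ S.mulVec (δ i))}
      ((c + 1) / 2 * min lmin 0 - (c - 1) / 2 * max lmax 0) := by
  have hH := symm_isHermitian hS
  constructor
  · -- membership
    have hnorm : ∀ (v : Fin d → ℝ) (μ : ℝ), v ≠ 0 → S.mulVec v = μ • v →
        ∃ u : Fin d → ℝ, u ⬝ᵥ u = 1 ∧ u ⬝ᵥ S.mulVec u = μ := by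
      intro v μ hv hSv
      have hpos : 0 < v ⬝ᵥ v :=
        lt_of_le_of_ne (Finset.sum_nonneg fun k _ => mul_self_nonneg _)
          (fun h => hv (dotProduct_self_eq_zero.mp h.symm))
      set a : ℝ := Real.sqrt (v ⬝ᵥ v) with ha
      have ha2 : a * a = v ⬝ᵥ v := Real.mul_self_sqrt hpos.le
      have ha0 : a ≠ 0 := by
        intro h; rw [h] at ha2; simp at ha2; linarith
      refine ⟨a⁻¹ • v, ?_, ?_⟩
      · rw [smul_dotProduct, dotProduct_smul, smul_eq_mul, smul_eq_mul, ← ha2]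
        field_simp
      · rw [Matrix.mulVec_smul, hSv]
        simp only [smul_dotProduct, dotProduct_smul, smul_eq_mul, smul_smul]
        rw [← ha2]
        field_simp
    obtain ⟨vn, hvn0, hvn⟩ := hmin.1
    obtain ⟨vx, hvx0, hvx⟩ := hmax.1
    obtain ⟨un, hun1, hunS⟩ := hnorm vn lmin hvn0 hvn
    obtain ⟨ux, hux1, huxS⟩ := hnorm vx lmax hvx0 hvx
    set u : Fin d → ℝ := if lmin < 0 then un else 0 with hu
    set v : Fin d → ℝ := if 0 < lmax then ux else 0 with hv
    have huu : u ⬝ᵥ u ≤ 1 := by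
      rw [hu]; split_ifs
      · exact hun1.le
      · norm_num [zero_dotProduct]
    have hvv : v ⬝ᵥ v ≤ 1 := by
      rw [hv]; split_ifs
      · exact hux1.le
      · norm_num [zero_dotProduct]
    have huS : u ⬝ᵥ S.mulVec u = min lmin 0 := by
      rw [hu]; split_ifs with h
      · rw [hunS, min_eq_left h.le]
      · rw [min_eq_right (not_lt.mp h)]; simp
    have hvS : v ⬝ᵥ S.mulVec v = max lmax 0 := by
      rw [hv]; split_ifs with h
      · rw [huxS, max_eq_left h.le]
      · rw [max_eq_right (not_lt.mp h)]; simp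
    refine ⟨fun i => if i.val ≤ 1 then (c+1)/4 else if i.val ≤ 3 then -((c-1)/4) else 0,
      fun i => if i.val = 0 then u else if i.val = 1 then -u else
        if i.val = 2 then v else if i.val = 3 then -v else 0, ?_, ?_, ?_, ?_, ?_⟩
    · rw [sum_four hm _ (fun i hi => by
        have h1 : ¬ i.val ≤ 1 := by omega
        have h2 : ¬ i.val ≤ 3 := by omega
        simp [h1, h2])]
      norm_num
      ring
    · rw [sum_four hm _ (fun i hi => by
        have h1 : ¬ i.val ≤ 1 := by omega
        have h2 : ¬ i.val ≤ 3 := by omega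
        simp [h1, h2])]
      norm_num
      rw [abs_of_nonneg (by linarith : (0:ℝ) ≤ (c+1)/4),
        abs_of_nonneg (by linarith : (0:ℝ) ≤ (c-1)/4)]
      linarith
    · rw [sum_four hm _ (fun i hi => by
        have h1 : ¬ i.val ≤ 1 := by omega
        have h2 : ¬ i.val ≤ 3 := by omega
        simp [h1, h2])]
      norm_num
    · intro i
      rcases Nat.lt_or_ge i.val 4 with h | h
      · interval_cases hI : i.val <;>
          simp_all [neg_dotProduct, dotProduct_neg]
      · have h0 : ¬ i.val = 0 := by omega
        have h1 : ¬ i.val = 1 := by omega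
        have h2 : ¬ i.val = 2 := by omega
        have h3 : ¬ i.val = 3 := by omega
        simp [h0, h1, h2, h3]
    · rw [sum_four hm _ (fun i hi => by
        have h1 : ¬ i.val ≤ 1 := by omega
        have h2 : ¬ i.val ≤ 3 := by omega
        simp [h1, h2])]
      norm_num [Matrix.mulVec_neg, dotProduct_neg, neg_dotProduct]
      rw [huS, hvS]
      ring
  · -- lower bound
    rintro t ⟨w, δ, hw1, hwc, -, hδ1, rfl⟩
    have hq : ∀ i, min lmin 0 ≤ δ i ⬝ᵥ S.mulVec (δ i) ∧
        δ i ⬝ᵥ S.mulVec (δ i) ≤ max lmax 0 := by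
      intro i
      have hs0 : 0 ≤ δ i ⬝ᵥ δ i := Finset.sum_nonneg fun k _ => mul_self_nonneg _
      have hs1 := hδ1 i
      have h1 := quad_lower hH (fun μ hμ => hmin.2 hμ) (δ i)
      have h2 := quad_upper hH (fun μ hμ => hmax.2 hμ) (δ i)
      constructor
      · rcases le_or_gt 0 lmin with h | h
        · nlinarith [min_le_right lmin (0:ℝ), mul_nonneg h hs0]
        · nlinarith [min_le_left lmin (0:ℝ)]
      · rcases le_or_gt 0 lmax with h | h
        · nlinarith [le_max_left lmax (0:ℝ)]
        · nlinarith [le_max_right lmax (0:ℝ), mul_nonneg (le_of_lt (neg_pos.mpr h)) hs0]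
    have key : ∀ i, max (w i) 0 * min lmin 0 - max (-(w i)) 0 * max lmax 0
        ≤ w i * (δ i ⬝ᵥ S.mulVec (δ i)) := by
      intro i
      rcases le_or_gt 0 (w i) with h | h
      · rw [max_eq_left h, max_eq_right (by linarith)]
        have := (hq i).1
        nlinarith
      · rw [max_eq_right h.le, max_eq_left (by linarith)]
        have := (hq i).2
        nlinarith
    have hsum := Finset.sum_le_sum (fun i (_ : i ∈ Finset.univ) => key i)
    rw [Finset.sum_sub_distrib, ← Finset.sum_mul, ← Finset.sum_mul] at hsum
    set P := ∑ i, max (w i) 0 with hP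
    set N := ∑ i, max (-(w i)) 0 with hN
    have hPN1 : P - N = 1 := by
      rw [hP, hN, ← Finset.sum_sub_distrib, ← hw1]
      exact Finset.sum_congr rfl fun i _ => max_zero_sub_max_neg_zero_eq_self (w i)
    have hPNc : P + N ≤ c := by
      rw [hP, hN, ← Finset.sum_add_distrib]
      calc ∑ i, (max (w i) 0 + max (-(w i)) 0) = ∑ i, |w i| := by
            exact Finset.sum_congr rfl fun i _ => max_zero_add_max_neg_zero_eq_abs_self (w i)
        _ ≤ c := hwc
    have hP0 : 0 ≤ P := Finset.sum_nonneg fun i _ => le_max_right _ _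
    have hN0 : 0 ≤ N := Finset.sum_nonneg fun i _ => le_max_right _ _
    have hmn : min lmin 0 ≤ 0 := min_le_right _ _
    have hmx : 0 ≤ max lmax 0 := le_max_right _ _
    nlinarith [mul_nonneg (by linarith : (0:ℝ) ≤ (c+1)/2 - P) (by linarith : 0 ≤ -(min lmin 0)),
      mul_nonneg (by linarith : (0:ℝ) ≤ (c-1)/2 - N) hmx]
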